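/- For the MacLane configuration C₈, the element a₀ ∈ A whose only nonzero values are a₀(4, p₄₅) = x₇ − x₆ − x₃, a₀(2, p₂₃) = −x₅, and a₀(6, p₂₄₆) = −x₇ does not lie in the subgroup U + B of A. (Equivalently, the image of a₀ in W = A/(U+B) is non-zero.) -/

import Mathlib

open scoped Classical

/- The MacLane configuration `C₈`.  The generator index `i : Fin 7` corresponds to the
line `l_{i+1}`, and the point index `q : Fin 8` enumerates the points of `𝒫₀` in the
order `p₁₃₅, p₁₄₇, p₁₆, p₂₃, p₂₄₆, p₂₅₇, p₃₆₇, p₄₅`. -/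

/-- `through q` is the set of generator indices `i` (for lines `l_{i+1}`) passing
through the point `q ∈ 𝒫₀`. -/
def through : Fin 8 → Finset (Fin 7) :=
  ![{0, 2, 4},   -- p₁₃₅ :  l₁, l₃, l₅
    {0, 3, 6},   -- p₁₄₇ :  l₁, l₄, l₇
    {0, 5},      -- p₁₆  :  l₁, l₆
    {1, 2},      -- p₂₃  :  l₂, l₃
    {1, 3, 5},   -- p₂₄₆ :  l₂, l₄, l₆
    {1, 4, 6},   -- p₂₅₇ :  l₂, l₅, l₇
    {2, 5, 6},   -- p₃₆₇ :  l₃, l₆, l₇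
    {3, 4}]      -- p₄₅  :  l₄, l₅

/-- `𝒜 = {(i,q) : l_{i+1} incident to q}`. -/
def A8 : Type := {z : Fin 7 × Fin 8 // z.1 ∈ through z.2}

/-- The free Lie ring on `x₁, …, x₇` (`x i` is `x_{i+1}`). -/
abbrev L8 := FreeLieAlgebra ℤ (Fin 7)

noncomputable def x (i : Fin 7) : L8 := FreeLieAlgebra.of ℤ i

/-- The embedding of `H = ℤ⁷` into the free Lie ring, `v ↦ Σᵢ vᵢ • xᵢ`. -/
noncomputable def hmap (v : Fin 7 → ℤ) : L8 := ∑ i, v i • x i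

/-- `s_q = Σ_{j : l_{j+1} incident to q} x_j`. -/
noncomputable def s (q : Fin 8) : L8 := ∑ j ∈ through q, x j

/-- The additive subgroup `R₂ ⊆ L`, spanned by the `[xᵢ, s_q]`, `(i,q) ∈ 𝒜`. -/
noncomputable def R2 : AddSubgroup L8 :=
  AddSubgroup.closure {y | ∃ z : A8, y = ⁅x z.val.1, s z.val.2⁆}

/-- The additive subgroup `R₃ = [H, R₂] ⊆ L`. -/
noncomputable def R3 : AddSubgroup L8 :=
  AddSubgroup.closure {y | ∃ (k : Fin 7) (r : L8), r ∈ R2 ∧ y = ⁅x k, r⁆}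

/-- `s_q` as an element of `H = ℤ⁷`. -/
def sH (q : Fin 8) : Fin 7 → ℤ := fun k => if k ∈ through q then 1 else 0

/-- `A = H^𝒜`, the abelian group of functions `𝒜 → H`. -/
abbrev A := A8 → (Fin 7 → ℤ)

/-- `a⁽⁰⁾_{i,q}(j,r) = δ_{ij} δ_{qr} xᵢ` for `(i,q) ∈ 𝒜`. -/
noncomputable def a0 (z : A8) : A :=
  fun w => if w.val = z.val then Pi.single z.val.1 1 else 0

/-- `a⁽¹⁾_{i,q}(j,r) = δ_{qr} xᵢ` for `i : Fin 7`, `q ∈ 𝒫₀`. -/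
noncomputable def a1 (i : Fin 7) (q : Fin 8) : A :=
  fun w => if w.val.2 = q then Pi.single i 1 else 0

/-- `a⁽²⁾_{i,q₁,q₂}(j,r) = δ_{ij} δ_{q₁ r} s_{q₂}` for `(i,q₁), (i,q₂) ∈ 𝒜`. -/
noncomputable def a2 (i : Fin 7) (q₁ q₂ : Fin 8) : A :=
  fun w => if w.val = (i, q₁) then sH q₂ else 0

/-- The subgroup `U ⊆ A` generated by the `a⁽⁰⁾`, `a⁽¹⁾`, `a⁽²⁾`. -/
noncomputable def U : AddSubgroup A :=
  AddSubgroup.closure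
    ({f | ∃ z : A8, f = a0 z} ∪
     {f | ∃ (i : Fin 7) (q : Fin 8), f = a1 i q} ∪
     {f | ∃ (i : Fin 7) (q₁ q₂ : Fin 8), i ∈ through q₁ ∧ i ∈ through q₂ ∧
        f = a2 i q₁ q₂})

/-- `τ(a; i, q) = [[xᵢ, a(i,q)], s_q] + [xᵢ, Σ_{j : l_j ∋ q} [x_j, a(j,q)]]`. -/
noncomputable def tau (a : A) (z : A8) : L8 :=
  ⁅⁅x z.val.1, hmap (a z)⁆, s z.val.2⁆ +
    ⁅x z.val.1, ∑ j : Fin 7,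
      if h : j ∈ through z.val.2 then ⁅x j, hmap (a ⟨(j, z.val.2), h⟩)⁆ else 0⁆

/-- The subgroup `B ⊆ A` of functions `a(i,q)` not depending on the point `q`. -/
def B : AddSubgroup A where
  carrier := {a | ∀ z w : A8, z.val.1 = w.val.1 → a z = a w}
  add_mem' := by
    intro a b ha hb z w h
    simp only [Pi.add_apply, ha z w h, hb z w h]
  zero_mem' := by intro z w h; rfl
  neg_mem' := by
    intro a ha z w h
    simp only [Pi.neg_apply, ha z w h]

/-- The element `a₀ = ḡ⁺ − ḡ⁻ : 𝒜 → H`, whose only nonzero values are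
`a₀(4, p₄₅) = x₇ − x₆ − x₃`, `a₀(2, p₂₃) = −x₅` and `a₀(6, p₂₄₆) = −x₇`.
(In our indexing: line `l₄` is `3 : Fin 7`, `l₂` is `1`, `l₆` is `5`; the points
`p₄₅, p₂₃, p₂₄₆` are `7, 3, 4 : Fin 8`.) -/
noncomputable def aZero : A := fun z =>
  if z.val = ((3 : Fin 7), (7 : Fin 8)) then
    Pi.single (6 : Fin 7) 1 - Pi.single (5 : Fin 7) 1 - Pi.single (2 : Fin 7) 1
  else if z.val = ((1 : Fin 7), (3 : Fin 8)) then -Pi.single (4 : Fin 7) 1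
  else if z.val = ((5 : Fin 7), (4 : Fin 8)) then -Pi.single (6 : Fin 7) 1
  else 0


/-! ### Auxiliary material for the proof -/

instance A8.instFintype : Fintype A8 :=
  inferInstanceAs (Fintype {z : Fin 7 × Fin 8 // z.1 ∈ through z.2})

instance A8.instDecidableEq : DecidableEq A8 :=
  inferInstanceAs (DecidableEq {z : Fin 7 × Fin 8 // z.1 ∈ through z.2})

/-- Coefficients of a `ZMod 3`-valued linear functional on `A` vanishing on `U + B`
but not on `aZero`. -/
def cc : Fin 7 → Fin 8 → Fin 7 → ZMod 3 :=
  ![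
  ![  ![0, 2, 1, 1, 2, 0, 2],
    ![0, 0, 0, 0, 0, 0, 0],
    ![0, 1, 2, 2, 1, 0, 1],
    ![0, 0, 0, 0, 0, 0, 0],
    ![0, 0, 0, 0, 0, 0, 0],
    ![0, 0, 0, 0, 0, 0, 0],
    ![0, 0, 0, 0, 0, 0, 0],
    ![0, 0, 0, 0, 0, 0, 0]],
  ![  ![0, 0, 0, 0, 0, 0, 0],
    ![0, 0, 0, 0, 0, 0, 0],
    ![0, 0, 0, 0, 0, 0, 0],
    ![2, 0, 0, 2, 1, 1, 2],
    ![1, 0, 0, 1, 2, 2, 1],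
    ![0, 0, 0, 0, 0, 0, 0],
    ![0, 0, 0, 0, 0, 0, 0],
    ![0, 0, 0, 0, 0, 0, 0]],
  ![  ![2, 0, 0, 2, 1, 1, 2],
    ![0, 0, 0, 0, 0, 0, 0],
    ![0, 0, 0, 0, 0, 0, 0],
    ![1, 0, 0, 1, 2, 2, 1],
    ![0, 0, 0, 0, 0, 0, 0],
    ![0, 0, 0, 0, 0, 0, 0],
    ![0, 0, 0, 0, 0, 0, 0],
    ![0, 0, 0, 0, 0, 0, 0]],
  ![  ![0, 0, 0, 0, 0, 0, 0],
    ![0, 0, 0, 0, 0, 0, 0],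
    ![0, 0, 0, 0, 0, 0, 0],
    ![0, 0, 0, 0, 0, 0, 0],
    ![2, 2, 1, 0, 0, 1, 1],
    ![0, 0, 0, 0, 0, 0, 0],
    ![0, 0, 0, 0, 0, 0, 0],
    ![1, 1, 2, 0, 0, 2, 2]],
  ![  ![1, 1, 2, 0, 0, 2, 2],
    ![0, 0, 0, 0, 0, 0, 0],
    ![0, 0, 0, 0, 0, 0, 0],
    ![0, 0, 0, 0, 0, 0, 0],
    ![0, 0, 0, 0, 0, 0, 0],
    ![0, 0, 0, 0, 0, 0, 0],
    ![0, 0, 0, 0, 0, 0, 0],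
    ![2, 2, 1, 0, 0, 1, 1]],
  ![  ![0, 0, 0, 0, 0, 0, 0],
    ![0, 0, 0, 0, 0, 0, 0],
    ![0, 2, 1, 1, 2, 0, 2],
    ![0, 0, 0, 0, 0, 0, 0],
    ![0, 1, 2, 2, 1, 0, 1],
    ![0, 0, 0, 0, 0, 0, 0],
    ![0, 0, 0, 0, 0, 0, 0],
    ![0, 0, 0, 0, 0, 0, 0]],
  ![  ![0, 0, 0, 0, 0, 0, 0],
    ![0, 0, 0, 0, 0, 0, 0],
    ![0, 0, 0, 0, 0, 0, 0],
    ![0, 0, 0, 0, 0, 0, 0],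
    ![0, 0, 0, 0, 0, 0, 0],
    ![0, 0, 0, 0, 0, 0, 0],
    ![0, 0, 0, 0, 0, 0, 0],
    ![0, 0, 0, 0, 0, 0, 0]]]

/-- Extension of `a : A` by zero to all of `Fin 7 × Fin 8`. -/
def ext (a : A) (i : Fin 7) (q : Fin 8) : Fin 7 → ℤ :=
  if h : i ∈ through q then a ⟨(i, q), h⟩ else 0

lemma ext_add (a b : A) (i : Fin 7) (q : Fin 8) :
    ext (a + b) i q = ext a i q + ext b i q := by
  unfold ext; split
  · rfl
  · simp

/-- The functional itself. -/
def phi : A →+ ZMod 3 where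
  toFun a := ∑ i : Fin 7, ∑ q : Fin 8, ∑ k : Fin 7, cc i q k * ((ext a i q k : ℤ) : ZMod 3)
  map_zero' := by
    have h0 : ∀ i q, ext (0 : A) i q = 0 := fun i q => by unfold ext; split <;> rfl
    simp [h0]
  map_add' a b := by
    simp only [ext_add, Pi.add_apply, Int.cast_add, mul_add, Finset.sum_add_distrib]

lemma phi_a0 : ∀ z : A8, phi (a0 z) = 0 := by decide
lemma phi_a1 : ∀ (i : Fin 7) (q : Fin 8), phi (a1 i q) = 0 := by decide
lemma phi_a2 : ∀ (i : Fin 7) (q₁ q₂ : Fin 8),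
    i ∈ through q₁ → i ∈ through q₂ → phi (a2 i q₁ q₂) = 0 := by decide
lemma phi_aZero : phi aZero ≠ 0 := by decide

/-- A canonical point on each line. -/
def fq : Fin 7 → Fin 8 := ![0, 3, 0, 1, 0, 2, 1]

lemma mem_fq : ∀ i : Fin 7, i ∈ through (fq i) := by decide

lemma cc_zero : ∀ (i : Fin 7) (q : Fin 8) (k : Fin 7), i ∉ through q → cc i q k = 0 := by
  decide

lemma cc_col_sum : ∀ (i k : Fin 7), (∑ q : Fin 8, cc i q k) = 0 := by decide

lemma phi_B (a : A) (ha : a ∈ B) : phi a = 0 := by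
  have key : ∀ (i : Fin 7) (q : Fin 8) (k : Fin 7),
      cc i q k * ((ext a i q k : ℤ) : ZMod 3)
        = cc i q k * ((a ⟨(i, fq i), mem_fq i⟩ k : ℤ) : ZMod 3) := by
    intro i q k
    unfold ext
    split
    · next h => rw [ha ⟨(i, q), h⟩ ⟨(i, fq i), mem_fq i⟩ rfl]
    · next h => rw [cc_zero i q k h, zero_mul, zero_mul]
  show (∑ i : Fin 7, ∑ q : Fin 8, ∑ k : Fin 7,
      cc i q k * ((ext a i q k : ℤ) : ZMod 3)) = 0
  simp only [key]
  refine Finset.sum_eq_zero fun i _ => ?_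
  rw [Finset.sum_comm]
  refine Finset.sum_eq_zero fun k _ => ?_
  rw [← Finset.sum_mul, cc_col_sum, zero_mul]


/-- **Lemma 3.2 of Rybnikov's paper.** For the MacLane configuration, the image of
`a₀` in `W = A/(U + B)` is non-zero, i.e. `a₀ ∉ U + B`. -/
theorem aZero_not_in_U_sup_B : aZero ∉ U ⊔ B := by
  intro h
  have hU : U ≤ phi.ker := by
    unfold U
    rw [AddSubgroup.closure_le]
    rintro f hf
    rcases hf with (⟨z, rfl⟩ | ⟨i, q, rfl⟩) | ⟨i, q₁, q₂, h1, h2, rfl⟩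
    · exact phi_a0 z
    · exact phi_a1 i q
    · exact phi_a2 i q₁ q₂ h1 h2
  have hB : B ≤ phi.ker := fun a ha => phi_B a ha
  have hker := (sup_le hU hB) h
  exact phi_aZero hker
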